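/- arXiv:2301.12728 — 3 statements merged into one kernel-verified Lean document; each statement's English description precedes it below -/
import Mathlib

section
/- For every integer k ≥ 0, one has 1 + ∑_{j=1}^{k} ∑_{(i_1,...,i_j): i_l ≥ 1, j ≤ i_1+...+i_j ≤ k} (-1)^j · (k+1)!/(i_1! ··· i_j! (k+1-i_1-...-i_j)!) = (-1)^k. -/
open Finset

lemma sum_adt_succ {M : Type*} [AddCommMonoid M] (j m : ℕ) (f : (Fin (j+1) → ℕ) → M) :
    ∑ x ∈ Finset.Nat.antidiagonalTuple (j+1) m, f x
      = ∑ t ∈ range (m+1), ∑ i ∈ Finset.Nat.antidiagonalTuple j (m-t), f (Fin.cons t i) := by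
  rw [Finset.sum_sigma']
  refine Finset.sum_nbij'
    (i := fun (x : Fin (j+1) → ℕ) => (⟨x 0, Fin.tail x⟩ : Σ _ : ℕ, (Fin j → ℕ)))
    (j := fun p => Fin.cons p.1 p.2)
    (f := f) (g := fun p => f (Fin.cons p.1 p.2))
    (s := Finset.Nat.antidiagonalTuple (j+1) m)
    (t := (range (m+1)).sigma fun t => Finset.Nat.antidiagonalTuple j (m-t))
    ?_ ?_ ?_ ?_ ?_
  · intro x hx
    rw [Finset.Nat.mem_antidiagonalTuple, Fin.sum_univ_succ] at hx
    simp only [Finset.mem_sigma, Finset.mem_range, Finset.Nat.mem_antidiagonalTuple]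
    refine ⟨by omega, ?_⟩
    simp only [Fin.tail]
    omega
  · intro p hp
    simp only [Finset.mem_sigma, Finset.mem_range, Finset.Nat.mem_antidiagonalTuple] at hp
    rw [Finset.Nat.mem_antidiagonalTuple, Fin.sum_cons, hp.2]
    omega
  · intro x _
    exact Fin.cons_self_tail x
  · intro p _
    simp [Fin.tail_cons]
  · intro x _
    beta_reduce
    rw [Fin.cons_self_tail]

/-- `T j m` = sum over compositions of `m` into `j` positive parts of `1/∏ i_l!`. -/
noncomputable def T (j m : ℕ) : ℚ :=
  ∑ x ∈ Finset.Nat.antidiagonalTuple j m,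
    (if ∀ l, 1 ≤ x l then (∏ l, ((x l).factorial : ℚ))⁻¹ else 0)

lemma T_zero_zero : T 0 0 = 1 := by
  simp [T, Finset.Nat.antidiagonalTuple_zero_zero]

lemma T_zero_succ (n : ℕ) : T 0 (n + 1) = 0 := by
  simp [T, Finset.Nat.antidiagonalTuple_zero_succ]

lemma T_eq_zero_of_lt {j m : ℕ} (h : m < j) : T j m = 0 := by
  apply Finset.sum_eq_zero
  intro x hx
  rw [Finset.Nat.mem_antidiagonalTuple] at hx
  rw [if_neg]
  intro hall
  have hj : j ≤ m := by
    calc j = ∑ _l : Fin j, 1 := by simp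
    _ ≤ ∑ l, x l := Finset.sum_le_sum (fun l _ => hall l)
    _ = m := hx
  omega

lemma T_succ (j m : ℕ) :
    T (j + 1) m = ∑ t ∈ Icc 1 m, ((t.factorial : ℚ))⁻¹ * T j (m - t) := by
  rw [T, sum_adt_succ]
  have hr : range (m + 1) = insert 0 (Icc 1 m) := by
    ext x; simp; omega
  rw [hr, Finset.sum_insert (by simp)]
  have h0 : ∑ i ∈ Finset.Nat.antidiagonalTuple j (m - 0),
      (if ∀ l, 1 ≤ (Fin.cons 0 i : Fin (j+1) → ℕ) l
        then (∏ l, (((Fin.cons 0 i : Fin (j+1) → ℕ) l).factorial : ℚ))⁻¹ else 0) = 0 := by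
    apply Finset.sum_eq_zero
    intro i _
    rw [if_neg]
    intro hall
    simpa using hall 0
  rw [h0, zero_add]
  apply Finset.sum_congr rfl
  intro t ht
  rw [T, Finset.mul_sum]
  apply Finset.sum_congr rfl
  intro i _
  have hcond : (∀ l, 1 ≤ (Fin.cons t i : Fin (j+1) → ℕ) l) ↔ (1 ≤ t ∧ ∀ l, 1 ≤ i l) := by
    rw [Fin.forall_fin_succ]
    simp [Fin.cons_zero, Fin.cons_succ]
  have hone : 1 ≤ t := by simp at ht; omega
  have hprod : (∏ l, (((Fin.cons t i : Fin (j+1) → ℕ) l).factorial : ℚ)) =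
      (t.factorial : ℚ) * ∏ l, ((i l).factorial : ℚ) := by
    rw [Fin.prod_univ_succ]
    simp [Fin.cons_zero, Fin.cons_succ]
  by_cases hP : ∀ l, 1 ≤ i l
  · rw [if_pos (hcond.mpr ⟨hone, hP⟩), if_pos hP, hprod, mul_inv]
  · rw [if_neg (fun h => hP (hcond.mp h).2), if_neg hP, mul_zero]

lemma G_eq (m : ℕ) :
    ∑ j ∈ range (m + 1), (-1 : ℚ) ^ j * T j m = (-1 : ℚ) ^ m / m.factorial := by
  induction m using Nat.strong_induction_on with
  | _ m IH =>
    match m with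
    | 0 => simp [T_zero_zero]
    | n + 1 =>
      rw [Finset.sum_range_succ']
      simp only [pow_zero, one_mul, T_zero_succ, add_zero]
      have hstep : ∀ j, (-1 : ℚ) ^ (j + 1) * T (j + 1) (n + 1)
          = -∑ t ∈ Icc 1 (n + 1), ((t.factorial : ℚ))⁻¹ * ((-1 : ℚ) ^ j * T j (n + 1 - t)) := by
        intro j
        rw [T_succ, pow_succ, Finset.mul_sum, ← Finset.sum_neg_distrib]
        apply Finset.sum_congr rfl
        intro t _
        ring
      rw [Finset.sum_congr rfl (fun j _ => hstep j), Finset.sum_neg_distrib, Finset.sum_comm]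
      have hinner : ∀ t ∈ Icc 1 (n + 1),
          ∑ j ∈ range (n + 1), ((t.factorial : ℚ))⁻¹ * ((-1 : ℚ) ^ j * T j (n + 1 - t))
            = ((t.factorial : ℚ))⁻¹ * ((-1 : ℚ) ^ (n + 1 - t) / (n + 1 - t).factorial) := by
        intro t ht
        simp only [mem_Icc] at ht
        rw [← Finset.mul_sum]
        congr 1
        rw [← IH (n + 1 - t) (by omega)]
        symm
        apply Finset.sum_subset
        · apply Finset.range_subset_range.mpr; omega
        · intro j _ hj
          rw [Finset.mem_range, not_lt] at hj
          rw [T_eq_zero_of_lt (by omega), mul_zero]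
      rw [Finset.sum_congr rfl hinner]
      have hterm : ∀ t ∈ Icc 1 (n + 1),
          ((t.factorial : ℚ))⁻¹ * ((-1 : ℚ) ^ (n + 1 - t) / (n + 1 - t).factorial)
            = ((-1 : ℚ) ^ (n + 1) * ((-1 : ℚ) ^ t * ((n + 1).choose t))) / (n + 1).factorial := by
        intro t ht
        simp only [mem_Icc] at ht
        have hfac : ((n + 1).choose t : ℚ) * (t.factorial : ℚ) * ((n + 1 - t).factorial : ℚ)
            = ((n + 1).factorial : ℚ) := by
          exact_mod_cast congrArg (Nat.cast (R := ℚ))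
            (Nat.choose_mul_factorial_mul_factorial (by omega : t ≤ n + 1))
        have hsign : (-1 : ℚ) ^ (n + 1 - t) = (-1 : ℚ) ^ (n + 1) * (-1 : ℚ) ^ t := by
          rw [← pow_add, show n + 1 + t = (n + 1 - t) + 2 * t by omega, pow_add, pow_mul]
          simp
        have h1 : (t.factorial : ℚ) ≠ 0 := Nat.cast_ne_zero.mpr (Nat.factorial_ne_zero t)
        have h2 : ((n + 1 - t).factorial : ℚ) ≠ 0 :=
          Nat.cast_ne_zero.mpr (Nat.factorial_ne_zero _)
        have h3 : ((n + 1).factorial : ℚ) ≠ 0 :=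
          Nat.cast_ne_zero.mpr (Nat.factorial_ne_zero _)
        rw [hsign]
        field_simp
        linear_combination (-1 : ℚ) * hfac
      rw [Finset.sum_congr rfl hterm, ← Finset.sum_div, ← Finset.mul_sum]
      have hchoose : ∑ t ∈ Icc 1 (n + 1), (-1 : ℚ) ^ t * ((n + 1).choose t) = -1 := by
        have h0 : ∑ t ∈ range (n + 2), (-1 : ℚ) ^ t * ((n + 1).choose t) = 0 := by
          have := Int.alternating_sum_range_choose_of_ne (n := n + 1) (by omega)
          have hq := congrArg (fun z : ℤ => (z : ℚ)) this
          push_cast at hq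
          convert hq using 2
        have hr : range (n + 2) = insert 0 (Icc 1 (n + 1)) := by
          ext x; simp; omega
        rw [hr, Finset.sum_insert (by simp)] at h0
        simp at h0
        linarith
      rw [hchoose]
      ring

/-- Sign-cancellation identity: for `k ≥ 0`,
`1 + ∑_{j=1}^{k} ∑_{i₁+⋯+i_j = m, j ≤ m ≤ k, i_l ≥ 1} (-1)^j (k+1)!/(i₁!⋯i_j!(k+1-m)!) = (-1)^k`. -/
theorem multinomial_sign_cancellation (k : ℕ) :
    1 + ∑ j ∈ Finset.Icc 1 k, ∑ m ∈ Finset.Icc j k,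
        ∑ i ∈ (Finset.Nat.antidiagonalTuple j m).filter (fun i => ∀ l, 1 ≤ i l),
          (-1 : ℚ) ^ j * ((k + 1).factorial : ℚ) /
            ((∏ l, ((i l).factorial : ℚ)) * ((k + 1 - m).factorial : ℚ)) =
      (-1 : ℚ) ^ k := by
  set c : ℕ → ℚ := fun m => ((k + 1).factorial : ℚ) / ((k + 1 - m).factorial : ℚ) with hc
  have key : ∀ j m : ℕ,
      ∑ i ∈ (Finset.Nat.antidiagonalTuple j m).filter (fun i => ∀ l, 1 ≤ i l),
          (-1 : ℚ) ^ j * ((k + 1).factorial : ℚ) /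
            ((∏ l, ((i l).factorial : ℚ)) * ((k + 1 - m).factorial : ℚ))
        = (-1 : ℚ) ^ j * c m * T j m := by
    intro j m
    rw [Finset.sum_filter, T, Finset.mul_sum]
    apply Finset.sum_congr rfl
    intro i _
    by_cases hP : ∀ l, 1 ≤ i l
    · rw [if_pos hP, if_pos hP]
      simp only [hc]
      rw [div_eq_mul_inv, div_eq_mul_inv, mul_inv]
      ring
    · rw [if_neg hP, if_neg hP, mul_zero]
  rw [Finset.sum_congr rfl (fun j _ => Finset.sum_congr rfl (fun m _ => key j m))]
  have h1 : ∀ j ∈ Icc 1 k,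
      ∑ m ∈ Icc j k, (-1 : ℚ) ^ j * c m * T j m
        = ∑ m ∈ Icc 1 k, (-1 : ℚ) ^ j * c m * T j m := by
    intro j hj
    simp only [mem_Icc] at hj
    apply Finset.sum_subset
    · intro m hm; simp only [mem_Icc] at *; omega
    · intro m hm hm'
      simp only [mem_Icc] at hm hm'
      rw [T_eq_zero_of_lt (by omega), mul_zero]
  rw [Finset.sum_congr rfl h1, Finset.sum_comm]
  have hT0 : ∀ m, 1 ≤ m → T 0 m = 0 := by
    intro m hm
    match m, hm with
    | n + 1, _ => exact T_zero_succ n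
  have h2 : ∀ m ∈ Icc 1 k,
      ∑ j ∈ Icc 1 k, (-1 : ℚ) ^ j * c m * T j m = c m * ((-1 : ℚ) ^ m / m.factorial) := by
    intro m hm
    simp only [mem_Icc] at hm
    have hsub : ∑ j ∈ Icc 1 k, (-1 : ℚ) ^ j * c m * T j m
        = ∑ j ∈ Icc 1 m, (-1 : ℚ) ^ j * c m * T j m := by
      symm
      apply Finset.sum_subset
      · intro j hj; simp only [mem_Icc] at *; omega
      · intro j hj hj'
        simp only [mem_Icc] at hj hj'
        rw [T_eq_zero_of_lt (by omega), mul_zero]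
    rw [hsub]
    have hG := G_eq m
    have hr : range (m + 1) = insert 0 (Icc 1 m) := by ext x; simp; omega
    rw [hr, Finset.sum_insert (by simp), pow_zero, one_mul, hT0 m hm.1, zero_add] at hG
    rw [← hG, Finset.mul_sum]
    apply Finset.sum_congr rfl
    intro j _
    ring
  rw [Finset.sum_congr rfl h2]
  have h3 : ∀ m ∈ Icc 1 k,
      c m * ((-1 : ℚ) ^ m / m.factorial) = (-1 : ℚ) ^ m * ((k + 1).choose m : ℚ) := by
    intro m hm
    simp only [mem_Icc] at hm
    have hfac : ((k + 1).choose m : ℚ) * (m.factorial : ℚ) * ((k + 1 - m).factorial : ℚ)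
        = ((k + 1).factorial : ℚ) := by
      exact_mod_cast congrArg (fun z : ℕ => (z : ℚ))
        (Nat.choose_mul_factorial_mul_factorial (by omega : m ≤ k + 1))
    have h1' : (m.factorial : ℚ) ≠ 0 := Nat.cast_ne_zero.mpr (Nat.factorial_ne_zero _)
    have h2' : ((k + 1 - m).factorial : ℚ) ≠ 0 := Nat.cast_ne_zero.mpr (Nat.factorial_ne_zero _)
    rw [hc]
    field_simp
    linear_combination (-1 : ℚ) * hfac
  rw [Finset.sum_congr rfl h3]
  have hr : range (k + 1) = insert 0 (Icc 1 k) := by ext x; simp; omega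
  have h4 : ∑ m ∈ range (k + 1), (-1 : ℚ) ^ m * ((k + 1).choose m : ℚ)
      = 1 + ∑ m ∈ Icc 1 k, (-1 : ℚ) ^ m * ((k + 1).choose m : ℚ) := by
    rw [hr, Finset.sum_insert (by simp)]
    simp
  rw [← h4]
  have h0 : ∑ m ∈ range (k + 2), (-1 : ℚ) ^ m * ((k + 1).choose m : ℚ) = 0 := by
    have := Int.alternating_sum_range_choose_of_ne (n := k + 1) (by omega)
    have hq := congrArg (fun z : ℤ => (z : ℚ)) this
    push_cast at hq
    convert hq using 2
  rw [Finset.sum_range_succ] at h0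
  simp only [Nat.choose_self, Nat.cast_one, mul_one] at h0
  have : (-1 : ℚ) ^ (k + 1) = -(-1 : ℚ) ^ k := by ring
  linarith [h0, this.symm ▸ h0]
end

section
/- Let A = {1,...,n} and let δ ∈ Δ(n), i.e. δ : A → ℕ_0 with ∑_{i=j}^{n} δ_i ≥ n-j+1 for 1 < j ≤ n and ∑_{i=1}^{n} δ_i = n-1. Then there is a unique partial ordering ≺ on A such that: (1) δ(c) equals the number of immediate ≺-predecessors of c; (2) d ≺ c implies d < c; (3) d ≺ c and d < e < c imply e ≺ c. Conversely any partial order satisfying (2), (3) and having a unique maximal element arises this way. -/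
/-- `Δ(n)`: maps `δ : {1,…,n} → ℕ₀` (indexed by `Fin n`) such that
`∑_{i=j}^{n} δ_i ≥ n - j + 1` for all `1 < j ≤ n` and `∑_{i=1}^{n} δ_i = n - 1`. -/
def treeIndexSet (n : ℕ) : Set (Fin n → ℕ) :=
  {δ | (∀ j : Fin n, 0 < (j : ℕ) →
          n - (j : ℕ) ≤ ∑ i ∈ Finset.Ici j, δ i) ∧
       ∑ i, δ i = n - 1}

/-- The number of immediate predecessors of `c` for a relation `r`. -/
noncomputable def immPredCount {n : ℕ} (r : Fin n → Fin n → Prop) (c : Fin n) : ℕ :=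
  Nat.card {d : Fin n // r d c ∧ ¬∃ e, r d e ∧ r e c}

namespace TreeProofAux
open Finset List


open Finset List

def stk (f : ℕ → ℕ) : ℕ → List ℕ
  | 0 => []
  | c+1 => ((c :: stk f c).drop (f c))

def gf (f : ℕ → ℕ) (c : ℕ) : ℕ := (c :: stk f c).getD (f c) 0

structure Inv (f : ℕ → ℕ) (c : ℕ) : Prop where
  sorted : (c :: stk f c).Pairwise (· > ·)
  len : (∑ i ∈ Finset.range c, f i) + (stk f c).length = c
  zero : c ≠ 0 → 0 ∈ stk f c
  nest : ∀ e, e < c → ∀ b ∈ stk f c, b ≤ e → b ≤ gf f e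
  top : ∀ e, e < c → ((∀ e', e < e' → e' < c → e < gf f e') ↔ e + 1 ∈ c :: stk f c)
  chain : (c :: stk f c).IsChain (fun B b => gf f (B-1) = b)

variable {f : ℕ → ℕ} {c : ℕ}

lemma Inv.mem_le (h : Inv f c) : ∀ x ∈ c :: stk f c, x ≤ c := by
  intro x hx
  rcases List.mem_cons.1 hx with rfl | hx
  · exact le_rfl
  · exact le_of_lt ((List.pairwise_cons.1 h.sorted).1 x hx)

lemma Inv.hlt (h : Inv f c) (hfc : f c ≤ (stk f c).length) : f c < (c :: stk f c).length := by
  simp only [List.length_cons]; omega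

lemma Inv.g_eq (h : Inv f c) (hfc : f c ≤ (stk f c).length) :
    gf f c = (c :: stk f c)[f c]'(h.hlt hfc) := by
  exact List.getD_eq_getElem _ _ (h.hlt hfc)

lemma Inv.g_mem (h : Inv f c) (hfc : f c ≤ (stk f c).length) : gf f c ∈ c :: stk f c := by
  rw [h.g_eq hfc]; exact List.getElem_mem _

lemma Inv.g_le (h : Inv f c) (hfc : f c ≤ (stk f c).length) : gf f c ≤ c :=
  h.mem_le _ (h.g_mem hfc)

lemma inv_zero : Inv f 0 where
  sorted := by simp [stk]
  len := by simp [stk]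
  zero := by simp
  nest := by omega
  top := by omega
  chain := by simp [stk]



variable {f : ℕ → ℕ} {c : ℕ}

lemma mem_drop_iff {M : List ℕ} (hs : M.Pairwise (· > ·)) {j : ℕ} (hj : j < M.length) (x : ℕ) :
    x ∈ M.drop j ↔ x ∈ M ∧ x ≤ M[j] := by
  have hpw := List.pairwise_iff_getElem.1 hs
  have hlen : (M.drop j).length = M.length - j := List.length_drop
  constructor
  · intro hx
    obtain ⟨i, hi, hix⟩ := List.mem_iff_getElem.1 hx
    rw [List.getElem_drop] at hix
    refine ⟨hix ▸ List.getElem_mem _, ?_⟩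
    rcases Nat.eq_zero_or_pos i with h0 | h0
    · subst h0; simp at hix; omega
    · have := hpw j (j+i) hj (by omega) (by omega)
      omega
  · rintro ⟨hxM, hxle⟩
    obtain ⟨i, hi, hix⟩ := List.mem_iff_getElem.1 hxM
    have hij : j ≤ i := by
      by_contra hcon
      have := hpw i j hi hj (by omega)
      omega
    refine List.mem_iff_getElem.2 ⟨i - j, by omega, ?_⟩
    rw [List.getElem_drop]
    simp only [show j + (i-j) = i from by omega]
    exact hix

lemma inv_succ (h : Inv f c) (hfc : f c ≤ (stk f c).length) : Inv f (c+1) := by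
  set M := c :: stk f c with hM
  have hlt : f c < M.length := h.hlt hfc
  have hK : stk f (c+1) = M.drop (f c) := by simp [stk, hM]
  have hKcons : stk f (c+1) = gf f c :: M.drop (f c + 1) := by
    rw [hK, List.drop_eq_getElem_cons hlt, ← h.g_eq hfc]
  have hgc_le : gf f c ≤ c := h.g_le hfc
  have hsorted_drop : (M.drop (f c)).Pairwise (· > ·) :=
    h.sorted.sublist (List.drop_sublist _ _)
  have hKle : ∀ x ∈ stk f (c+1), x ≤ gf f c := by
    intro x hx
    rw [hK, mem_drop_iff h.sorted hlt] at hx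
    rw [h.g_eq hfc]; exact hx.2
  have hKmemM : ∀ x ∈ stk f (c+1), x ∈ M := by
    intro x hx; rw [hK] at hx; exact List.mem_of_mem_drop hx
  constructor
  · -- sorted
    rw [List.pairwise_cons]
    refine ⟨fun b hb => by have := hKle b hb; omega, ?_⟩
    rw [hK]; exact hsorted_drop
  · -- len
    rw [Finset.sum_range_succ, hK, List.length_drop]
    have := h.len
    simp only [hM, List.length_cons] at *
    omega
  · -- zero
    intro _
    rw [hK, mem_drop_iff h.sorted hlt]
    refine ⟨?_, Nat.zero_le _⟩
    rcases Nat.eq_zero_or_pos c with rfl | hc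
    · simp [hM, stk]
    · exact List.mem_cons.2 (Or.inr (h.zero (by omega)))
  · -- nest
    intro e he b hb hble
    rcases Nat.lt_succ_iff_lt_or_eq.1 he with he' | rfl
    · have hbM := hKmemM b hb
      rcases List.mem_cons.1 hbM with rfl | hb'
      · omega
      · exact h.nest e he' b hb' hble
    · exact hKle b hb
  · -- top
    intro e he
    rcases Nat.lt_succ_iff_lt_or_eq.1 he with he' | rfl
    · have h1 : (∀ e', e < e' → e' < c+1 → e < gf f e') ↔
          ((∀ e', e < e' → e' < c → e < gf f e') ∧ e < gf f c) := by
        constructor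
        · intro H; exact ⟨fun e' a b => H e' a (by omega), H c he' (by omega)⟩
        · rintro ⟨H, hc⟩ e' h1 h2
          rcases Nat.lt_succ_iff_lt_or_eq.1 h2 with h3 | rfl
          · exact H e' h1 h3
          · exact hc
      rw [h1, h.top e he']
      constructor
      · rintro ⟨hmem, hlt'⟩
        refine List.mem_cons.2 (Or.inr ?_)
        rw [hK, mem_drop_iff h.sorted hlt]
        refine ⟨hmem, ?_⟩
        have := h.g_eq hfc
        omega
      · intro hmem
        rcases List.mem_cons.1 hmem with h' | h'
        · omega
        · rw [hK, mem_drop_iff h.sorted hlt] at h'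
          refine ⟨h'.1, ?_⟩
          have := h.g_eq hfc
          omega
    · constructor
      · intro _; exact List.mem_cons_self
      · intro _ e' h1 h2; omega
  · -- chain
    rw [hKcons, List.isChain_cons_cons]
    refine ⟨by simp, ?_⟩
    have hch : (M.drop (f c)).IsChain (fun B b => gf f (B-1) = b) :=
      h.chain.infix (List.drop_suffix _ _).isInfix
    rw [← hKcons, hK]
    exact hch

lemma inv_all (n : ℕ) (Hle : ∀ c, c < n → ∑ i ∈ Finset.range (c+1), f i ≤ c) :
    ∀ c, c ≤ n → Inv f c := by
  intro c
  induction c with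
  | zero => exact fun _ => inv_zero
  | succ c ih =>
    intro hc
    have h := ih (by omega)
    refine inv_succ h ?_
    have h2 := Hle c (by omega)
    rw [Finset.sum_range_succ] at h2
    have := h.len
    omega



lemma chain_straddle {R : ℕ → ℕ → Prop} (x : ℕ) :
    ∀ (L : List ℕ) (u : ℕ), (u :: L).IsChain R → x < u → (∃ y ∈ L, y ≤ x) →
      ∃ B b, R B b ∧ b ≤ x ∧ x < B ∧ B ∈ u :: L ∧ b ∈ L := by
  intro L
  induction L with
  | nil => simp
  | cons v t ih =>
    intro u hch hxu hy
    rcases List.isChain_cons_cons.1 hch with ⟨huv, hch'⟩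
    by_cases hvx : v ≤ x
    · exact ⟨u, v, huv, hvx, hxu, by simp, by simp⟩
    · push_neg at hvx
      obtain ⟨y, hyt, hyx⟩ := hy
      have hyt' : y ∈ t := by
        rcases List.mem_cons.1 hyt with h | h
        · omega
        · exact h
      obtain ⟨B, b, h1, h2, h3, h4, h5⟩ := ih v hch' hvx ⟨y, hyt', hyx⟩
      exact ⟨B, b, h1, h2, h3, by simp [List.mem_cons] at h4 ⊢; tauto, by simp [h5]⟩

lemma filter_length_sorted : ∀ (L : List ℕ), L.Pairwise (· > ·) → ∀ (j : ℕ) (hj : j < L.length),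
    (L.filter (fun x => decide (L[j] < x))).length = j := by
  intro L
  induction L with
  | nil => intro _ j hj; simp at hj
  | cons a t ih =>
    intro hs j hj
    have hat : ∀ x ∈ t, x < a := fun x hx => (List.pairwise_cons.1 hs).1 x hx
    cases j with
    | zero =>
      simp only [List.getElem_cons_zero]
      have h0 : ∀ x ∈ a :: t, ¬ (a < x) := by
        intro x hx
        rcases List.mem_cons.1 hx with h | h
        · omega
        · exact fun h' => absurd (hat x h) (by omega)
      rw [List.filter_eq_nil_iff.2 (by intro x hx; simpa using h0 x hx)]
      rfl
    | succ j =>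
      have hj' : j < t.length := by simpa using hj
      have hidx : (a :: t)[j+1] = t[j] := by simp
      rw [hidx, List.filter_cons]
      have hd : decide (t[j] < a) = true := decide_eq_true (hat _ (t.getElem_mem hj'))
      rw [if_pos hd]
      simp only [List.length_cons]
      rw [ih (List.pairwise_cons.1 hs).2 j hj']

lemma card_list {T : List ℕ} (hnd : T.Nodup) : Nat.card {x : ℕ // x ∈ T} = T.length := by
  have e : {x : ℕ // x ∈ T} ≃ {x : ℕ // x ∈ T.toFinset} :=
    Equiv.subtypeEquivRight (fun x => (List.mem_toFinset).symm)
  rw [Nat.card_congr e, Nat.card_eq_fintype_card, Fintype.card_coe,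
    List.toFinset_card_of_nodup hnd]

lemma card_eq_aux {n : ℕ} {M : List ℕ} (hs : M.Pairwise (· > ·)) {c : ℕ}
    (hcn : c < n) (hle : ∀ x ∈ M, x ≤ c) (a : ℕ)
    (P : Fin n → Prop)
    (hP : ∀ d : Fin n, P d ↔ (a < (d:ℕ) + 1 ∧ (d:ℕ) + 1 ∈ M)) :
    Nat.card {d : Fin n // P d} = (M.filter (fun x => decide (a < x))).length := by
  classical
  set T := M.filter (fun x => decide (a < x)) with hT
  have hTmem : ∀ x, x ∈ T ↔ x ∈ M ∧ a < x := by
    intro x; simp [hT, List.mem_filter]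
  have hTnd : T.Nodup := (hs.nodup).filter _
  have e1 : {d : Fin n // P d} ≃ {x : ℕ // x ∈ T} := by
    refine ⟨fun d => ⟨(d:ℕ)+1, (hTmem _).2 ⟨((hP d).1 d.2).2, ((hP d).1 d.2).1⟩⟩,
            fun x => ⟨⟨(x:ℕ)-1, ?_⟩, ?_⟩, fun d => ?_, fun x => ?_⟩
    · have hx := (hTmem _).1 x.2
      have := hle _ hx.1
      omega
    · have hx := (hTmem _).1 x.2
      rw [hP]
      have hx1 : 1 ≤ (x:ℕ) := by omega
      simp only [Nat.sub_add_cancel hx1]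
      exact ⟨hx.2, hx.1⟩
    · apply Subtype.ext
      apply Fin.ext
      simp
    · apply Subtype.ext
      have hx := (hTmem _).1 x.2
      simp only
      omega
  rw [Nat.card_congr e1, card_list hTnd]

lemma sum_split {n : ℕ} (j : Fin n) (f : Fin n → ℕ) :
    ∑ i ∈ Finset.Iio j, f i + ∑ i ∈ Finset.Ici j, f i = ∑ i, f i := by
  have hd : Disjoint (Finset.Iio j) (Finset.Ici j) := by
    simp [Finset.disjoint_left]
  rw [← Finset.sum_union hd]
  congr 1
  ext x
  simp [lt_or_ge]

lemma converse_part {n : ℕ} (hn : 0 < n) (r : Fin n → Fin n → Prop)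
    (h1 : ∀ a, ¬ r a a) (h2 : ∀ a b c, r a b → r b c → r a c)
    (h4 : ∀ d c, r d c → d < c) (h5 : ∀ d e c, r d c → d < e → e < c → r e c)
    (hmax : ∃! a : Fin n, ∀ b, ¬ r a b) :
    (fun c => immPredCount r c) ∈ treeIndexSet n := by
  classical
  obtain ⟨a, hamax, hauniq⟩ := hmax
  set Imm : Fin n → Fin n → Prop := fun d c => r d c ∧ ¬∃ e, r d e ∧ r e c with hImm
  have immuniq : ∀ d c c', Imm d c → Imm d c' → c = c' := by
    intro d c c' hc hc'
    by_contra hne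
    rcases lt_or_gt_of_ne hne with h | h
    · exact hc'.2 ⟨c, hc.1, h5 d c c' hc'.1 (h4 d c hc.1) h⟩
    · exact hc.2 ⟨c', hc'.1, h5 d c' c hc.1 (h4 d c' hc'.1) h⟩
  set F : Fin n → Finset (Fin n) := fun c => Finset.univ.filter (fun d => Imm d c) with hF
  have hmemF : ∀ d c, d ∈ F c ↔ Imm d c := by
    intro d c; simp [hF]
  have hcard : ∀ c, immPredCount r c = (F c).card := by
    intro c
    unfold immPredCount
    rw [Nat.card_eq_fintype_card]
    exact Fintype.card_subtype _
  have hdisj : ∀ s : Finset (Fin n), ∑ c ∈ s, (F c).card = (s.biUnion F).card := by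
    intro s
    rw [Finset.card_biUnion]
    intro x hx y hy hxy
    rw [Function.onFun, Finset.disjoint_left]
    intro d hdx hdy
    exact hxy (immuniq d x y ((hmemF d x).1 hdx) ((hmemF d y).1 hdy))
  have hmem_exists : ∀ d : Fin n, (∃ c, r d c) → ∃ c, Imm d c := by
    rintro d ⟨c₀, hc₀⟩
    set s := Finset.univ.filter (fun c => r d c) with hs
    have hne : s.Nonempty := ⟨c₀, by simp [hs, hc₀]⟩
    refine ⟨s.min' hne, ?_, ?_⟩
    · have := s.min'_mem hne; simp [hs] at this; exact this
    · rintro ⟨e, hde, hem⟩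
      have h1' : s.min' hne ≤ e := s.min'_le e (by simp [hs, hde])
      exact absurd (h4 e _ hem) (not_lt.2 h1')
  have hbu : Finset.univ.biUnion F = Finset.univ.erase a := by
    ext d
    rw [Finset.mem_biUnion, Finset.mem_erase]
    constructor
    · rintro ⟨c, -, hc⟩
      refine ⟨?_, Finset.mem_univ _⟩
      rintro rfl
      exact hamax c ((hmemF d c).1 hc).1
    · rintro ⟨hda, -⟩
      have hex : ∃ c, r d c := by
        by_contra hcon
        push_neg at hcon
        exact hda (hauniq d hcon)
      obtain ⟨c, hc⟩ := hmem_exists d hex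
      exact ⟨c, Finset.mem_univ _, (hmemF d c).2 hc⟩
  have htotal : ∑ c, (F c).card = n - 1 := by
    rw [hdisj, hbu, Finset.card_erase_of_mem (Finset.mem_univ _)]
    simp
  constructor
  · intro j hj
    have hsub : (Finset.Iio j).biUnion F ⊆ Finset.univ.filter (fun d => (d:ℕ)+1 < (j:ℕ)) := by
      intro d hd
      rw [Finset.mem_biUnion] at hd
      obtain ⟨c, hcj, hdc⟩ := hd
      have hdc' := h4 d c ((hmemF d c).1 hdc).1
      rw [Fin.lt_def] at hdc'
      have : (c:ℕ) < (j:ℕ) := Fin.lt_def.1 (Finset.mem_Iio.1 hcj)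
      simp only [Finset.mem_filter, Finset.mem_univ, true_and]
      omega
    have hcs : (Finset.univ.filter (fun d : Fin n => (d:ℕ)+1 < (j:ℕ))).card ≤ (j:ℕ) - 1 := by
      have := Finset.card_le_card_of_injOn (fun d : Fin n => (d:ℕ))
        (s := Finset.univ.filter (fun d : Fin n => (d:ℕ)+1 < (j:ℕ)))
        (t := Finset.range ((j:ℕ) - 1))
        (by intro d hd
            simp only [Finset.mem_coe, Finset.mem_filter, Finset.mem_univ, true_and] at hd
            simp only [Finset.mem_coe, Finset.mem_range]
            omega)
        (Fin.val_injective.injOn)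
      simpa using this
    have hIio : ∑ c ∈ Finset.Iio j, (F c).card ≤ (j:ℕ) - 1 :=
      le_trans (by rw [hdisj]; exact Finset.card_le_card hsub) hcs
    have hsp := sum_split j (fun c => (F c).card)
    have hcg : ∑ i ∈ Finset.Ici j, (fun c => immPredCount r c) i = ∑ i ∈ Finset.Ici j, (F i).card :=
      Finset.sum_congr rfl (fun i _ => hcard i)
    rw [hcg]
    have hjn : (j:ℕ) < n := j.isLt
    omega
  · have : ∑ i, (fun c => immPredCount r c) i = ∑ i, (F i).card :=
      Finset.sum_congr rfl (fun i _ => hcard i)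
    rw [this, htotal]

theorem main_part {n : ℕ} (hn : 0 < n) (δ : Fin n → ℕ)
    (hδ1 : ∀ j : Fin n, 0 < (j : ℕ) → n - (j : ℕ) ≤ ∑ i ∈ Finset.Ici j, δ i)
    (hδ2 : ∑ i, δ i = n - 1) :
    ∃! r : Fin n → Fin n → Prop,
        (∀ a, ¬ r a a) ∧ (∀ a b c, r a b → r b c → r a c) ∧
        (∀ c, δ c = immPredCount r c) ∧
        (∀ d c, r d c → d < c) ∧
        (∀ d e c, r d c → d < e → e < c → r e c) := by
  classical
  set f : ℕ → ℕ := fun i => if h : i < n then δ ⟨i, h⟩ else 0 with hf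
  have hfval : ∀ c : Fin n, f (c:ℕ) = δ c := by
    intro c; simp only [hf, c.isLt, dif_pos, Fin.eta]
  have hsum_univ : ∑ i ∈ Finset.range n, f i = n - 1 := by
    rw [← Fin.sum_univ_eq_sum_range, ← hδ2]
    exact Finset.sum_congr rfl (fun i _ => hfval i)
  have hsum_Iio : ∀ j : Fin n, ∑ i ∈ Finset.Iio j, δ i = ∑ k ∈ Finset.range (j:ℕ), f k := by
    intro j
    refine Finset.sum_bij' (fun (i : Fin n) _ => (i:ℕ))
      (fun (k : ℕ) (hk : k ∈ Finset.range (j:ℕ)) => (⟨k, lt_trans (Finset.mem_range.1 hk) j.isLt⟩ : Fin n))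
      ?_ ?_ ?_ ?_ ?_
    · intro i hi
      rw [Finset.mem_range]
      exact Fin.lt_def.1 (Finset.mem_Iio.1 hi)
    · intro k hk
      rw [Finset.mem_Iio, Fin.lt_def]
      exact Finset.mem_range.1 hk
    · intro i _; exact Fin.ext rfl
    · intro k _; rfl
    · intro i _; exact (hfval i).symm
  have Hle : ∀ c, c < n → ∑ i ∈ Finset.range (c+1), f i ≤ c := by
    intro c hc
    rcases eq_or_lt_of_le (show c+1 ≤ n from hc) with heq | hlt
    · rw [heq, hsum_univ]; omega
    · set j : Fin n := ⟨c+1, hlt⟩ with hj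
      have h1 := hδ1 j (by simp [hj])
      have h2 := sum_split j δ
      have h3 := hsum_Iio j
      have hjv : (j:ℕ) = c+1 := rfl
      rw [hδ2] at h2
      rw [hjv] at h1 h3
      omega
  have hfc : ∀ c, c < n → f c ≤ (stk f c).length := by
    intro c hc
    have hl := (inv_all n Hle c hc.le).len
    have h2 := Hle c hc
    rw [Finset.sum_range_succ] at h2
    omega
  set R : Fin n → Fin n → Prop := fun d c => gf f (c:ℕ) ≤ (d:ℕ) ∧ (d:ℕ) < (c:ℕ) with hR
  have Rirr : ∀ a : Fin n, ¬ R a a := by rintro a ⟨_, h⟩; omega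
  have Rtrans : ∀ a b c : Fin n, R a b → R b c → R a c := by
    rintro a b c ⟨h1, h2⟩ ⟨h3, h4⟩
    refine ⟨?_, by omega⟩
    have inv := inv_all n Hle (c:ℕ) c.isLt.le
    have hf' := hfc (c:ℕ) c.isLt
    rcases List.mem_cons.1 (inv.g_mem hf') with heq | hmem
    · omega
    · have := inv.nest (b:ℕ) h4 _ hmem h3
      omega
  have Rlt : ∀ d c : Fin n, R d c → d < c := by
    rintro d c ⟨_, h⟩; exact Fin.lt_def.2 h
  have Rint : ∀ d e c : Fin n, R d c → d < e → e < c → R e c := by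
    rintro d e c ⟨h1, h2⟩ hde hec
    rw [Fin.lt_def] at hde hec
    exact ⟨by omega, hec⟩
  have Rcount : ∀ c : Fin n, δ c = immPredCount R c := by
    intro c
    have hcn : (c:ℕ) < n := c.isLt
    have inv := inv_all n Hle (c:ℕ) hcn.le
    have hf' := hfc (c:ℕ) hcn
    have hP : ∀ d : Fin n, (R d c ∧ ¬∃ e, R d e ∧ R e c) ↔
        (gf f (c:ℕ) < (d:ℕ) + 1 ∧ (d:ℕ) + 1 ∈ (c:ℕ) :: stk f (c:ℕ)) := by
      intro d
      constructor
      · rintro ⟨⟨hg, hdc⟩, hni⟩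
        refine ⟨by omega, ?_⟩
        rw [← inv.top (d:ℕ) hdc]
        intro e' h1 h2
        by_contra hcon
        push_neg at hcon
        exact hni ⟨⟨e', by omega⟩, ⟨show gf f e' ≤ (d:ℕ) from hcon, show (d:ℕ) < e' from h1⟩,
          ⟨show gf f (c:ℕ) ≤ e' by omega, show e' < (c:ℕ) from h2⟩⟩
      · rintro ⟨ha, hmem⟩
        have hd1 : (d:ℕ) + 1 ≤ (c:ℕ) := inv.mem_le _ hmem
        have hdc : (d:ℕ) < (c:ℕ) := by omega
        have htop := (inv.top (d:ℕ) hdc).2 hmem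
        refine ⟨⟨by omega, hdc⟩, ?_⟩
        rintro ⟨e, ⟨hge, hde⟩, ⟨hgc, hec⟩⟩
        exact absurd (htop (e:ℕ) hde hec) (by omega)
    have h1 : immPredCount R c =
        (((c:ℕ) :: stk f (c:ℕ)).filter (fun x => decide (gf f (c:ℕ) < x))).length :=
      card_eq_aux inv.sorted hcn inv.mem_le _ _ hP
    have h2 := filter_length_sorted _ inv.sorted (f (c:ℕ)) (inv.hlt hf')
    rw [← inv.g_eq hf'] at h2
    rw [h1, h2, hfval]
  refine ⟨R, ⟨Rirr, Rtrans, Rcount, Rlt, Rint⟩, ?_⟩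
  rintro r' ⟨u1, u2, u3, u4, u5⟩
  have key : ∀ m : ℕ, ∀ c : Fin n, (c:ℕ) = m → ∀ d, r' d c ↔ R d c := by
    intro m
    induction m using Nat.strong_induction_on with
    | _ m ih =>
      intro c hcm d
      subst hcm
      have hcn : (c:ℕ) < n := c.isLt
      have inv := inv_all n Hle (c:ℕ) hcn.le
      have hf' := hfc (c:ℕ) hcn
      have IH : ∀ e : Fin n, (e:ℕ) < (c:ℕ) → ∀ d', r' d' e ↔ R d' e :=
        fun e he d' => ih (e:ℕ) he e rfl d'
      by_cases hne : ∃ d₀, r' d₀ c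
      · obtain ⟨d₀, hd₀⟩ := hne
        set s := Finset.univ.filter (fun d => r' d c) with hs
        have hsne : s.Nonempty := ⟨d₀, by simp [hs, hd₀]⟩
        set a := s.min' hsne with ha
        have har : r' a c := by
          have := s.min'_mem hsne; simp [hs] at this; exact this
        have hamin : ∀ d', r' d' c → a ≤ d' := fun d' hd' => s.min'_le d' (by simp [hs, hd'])
        have hint : ∀ d' : Fin n, r' d' c ↔ ((a:ℕ) ≤ (d':ℕ) ∧ (d':ℕ) < (c:ℕ)) := by
          intro d'
          constructor
          · intro hd'
            exact ⟨hamin d' hd', Fin.lt_def.1 (u4 d' c hd')⟩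
          · rintro ⟨hle', hlt'⟩
            rcases eq_or_lt_of_le hle' with heq | hlt2
            · have : a = d' := Fin.ext heq
              rw [← this]; exact har
            · exact u5 a d' c har (Fin.lt_def.2 hlt2) (Fin.lt_def.2 hlt')
        have hP : ∀ d' : Fin n, (r' d' c ∧ ¬∃ e, r' d' e ∧ r' e c) ↔
            ((a:ℕ) < (d':ℕ) + 1 ∧ (d':ℕ) + 1 ∈ (c:ℕ) :: stk f (c:ℕ)) := by
          intro d'
          constructor
          · rintro ⟨hd', hni⟩
            have h1 := (hint d').1 hd'
            refine ⟨by omega, ?_⟩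
            rw [← inv.top (d':ℕ) h1.2]
            intro e' he1 he2
            by_contra hcon
            push_neg at hcon
            have he'n : e' < n := by omega
            refine hni ⟨⟨e', he'n⟩, ?_, ?_⟩
            · rw [IH ⟨e', he'n⟩ he2]
              exact ⟨hcon, he1⟩
            · rw [hint]
              exact ⟨show (a:ℕ) ≤ e' by omega, show e' < (c:ℕ) from he2⟩
          · rintro ⟨h1, h2⟩
            have hd1 : (d':ℕ) + 1 ≤ (c:ℕ) := inv.mem_le _ h2
            have hdc : (d':ℕ) < (c:ℕ) := by omega
            have htop := (inv.top (d':ℕ) hdc).2 h2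
            refine ⟨(hint d').2 ⟨by omega, hdc⟩, ?_⟩
            rintro ⟨e, hde, hec⟩
            have hecn : (e:ℕ) < (c:ℕ) := Fin.lt_def.1 (u4 e c hec)
            have hre := (IH e hecn d').1 hde
            exact absurd (htop (e:ℕ) hre.2 hecn) (by omega)
        have hcount : immPredCount r' c =
            (((c:ℕ) :: stk f (c:ℕ)).filter (fun x => decide ((a:ℕ) < x))).length :=
          card_eq_aux inv.sorted hcn inv.mem_le _ _ hP
        have haM : (a:ℕ) ∈ (c:ℕ) :: stk f (c:ℕ) := by
          by_contra hnotin
          have hac : (a:ℕ) < (c:ℕ) := Fin.lt_def.1 (u4 a c har)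
          have h0 : (0:ℕ) ∈ stk f (c:ℕ) := inv.zero (by omega)
          obtain ⟨B, b, hRb, hb, hB, hBmem, hbmem⟩ :=
            chain_straddle (a:ℕ) (stk f (c:ℕ)) (c:ℕ) inv.chain hac ⟨0, h0, Nat.zero_le _⟩
          have hbne : b ≠ (a:ℕ) := fun h => hnotin (h ▸ List.mem_cons_of_mem _ hbmem)
          have hblt : b < (a:ℕ) := by omega
          have hBle : B ≤ (c:ℕ) := inv.mem_le _ hBmem
          have heB : B - 1 < (c:ℕ) := by omega
          have heBn : B - 1 < n := by omega
          have hbn : b < n := by omega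
          have hr1 : r' ⟨b, hbn⟩ ⟨B-1, heBn⟩ := by
            rw [IH ⟨B-1, heBn⟩ heB]
            exact ⟨show gf f (B-1) ≤ b from le_of_eq hRb, show b < B-1 by omega⟩
          have hr2 : r' ⟨B-1, heBn⟩ c := (hint _).2 ⟨show (a:ℕ) ≤ B-1 by omega, show B-1 < (c:ℕ) from heB⟩
          have hr3 : r' ⟨b, hbn⟩ c := u2 _ _ _ hr1 hr2
          have := hamin _ hr3
          rw [Fin.le_def] at this
          simp at this
          omega
        obtain ⟨i, hi, hia⟩ := List.mem_iff_getElem.1 haM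
        have hflen : (((c:ℕ) :: stk f (c:ℕ)).filter (fun x => decide ((a:ℕ) < x))).length = i := by
          have := filter_length_sorted _ inv.sorted i hi
          rw [hia] at this
          exact this
        have hfcval : f (c:ℕ) = i := by
          have h3 := u3 c
          rw [hcount, hflen] at h3
          have h4' := hfval c
          omega
        have hg : gf f (c:ℕ) = (a:ℕ) := by
          show ((c:ℕ) :: stk f (c:ℕ)).getD (f (c:ℕ)) 0 = (a:ℕ)
          rw [hfcval, List.getD_eq_getElem _ _ hi]
          exact hia
        rw [hint d, hR]
        simp only
        rw [hg]
      · push_neg at hne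
        have h0 : immPredCount r' c = 0 := by
          have : IsEmpty {d' : Fin n // r' d' c ∧ ¬∃ e, r' d' e ∧ r' e c} :=
            ⟨fun x => hne _ x.2.1⟩
          exact Nat.card_of_isEmpty
        have hfc0 : f (c:ℕ) = 0 := by
          have h3 := u3 c
          rw [h0] at h3
          have := hfval c
          omega
        have hgc : gf f (c:ℕ) = (c:ℕ) := by
          show ((c:ℕ) :: stk f (c:ℕ)).getD (f (c:ℕ)) 0 = (c:ℕ)
          rw [hfc0]
          rfl
        constructor
        · intro h; exact absurd h (hne d)
        · rintro ⟨h1, h2⟩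
          rw [hgc] at h1
          omega
  funext d c
  exact propext (key (c:ℕ) c rfl d)


end TreeProofAux

/-- A simple index set `δ ∈ Δ(n)` induces a unique partial (strict) ordering `≺` on
`{1,…,n}` such that (1) `δ(c)` is the number of immediate `≺`-predecessors of `c`;
(2) `d ≺ c` implies `d < c`; (3) `d ≺ c` and `d < e < c` imply `e ≺ c`.
Conversely, any such ordering with a unique maximal element arises this way. -/
theorem treeIndexSet_order_correspondence {n : ℕ} (hn : 0 < n) (δ : Fin n → ℕ)
    (hδ : δ ∈ treeIndexSet n) :
    (∃! r : Fin n → Fin n → Prop,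
        (∀ a, ¬ r a a) ∧ (∀ a b c, r a b → r b c → r a c) ∧
        (∀ c, δ c = immPredCount r c) ∧
        (∀ d c, r d c → d < c) ∧
        (∀ d e c, r d c → d < e → e < c → r e c)) ∧
      (∀ r : Fin n → Fin n → Prop,
        (∀ a, ¬ r a a) → (∀ a b c, r a b → r b c → r a c) →
        (∀ d c, r d c → d < c) →
        (∀ d e c, r d c → d < e → e < c → r e c) →
        (∃! a : Fin n, ∀ b, ¬ r a b) →
        (fun c => immPredCount r c) ∈ treeIndexSet n) := by
  obtain ⟨hδ1, hδ2⟩ := hδ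
  constructor
  · exact TreeProofAux.main_part hn δ hδ1 hδ2
  · intro r h1 h2 h4 h5 hmax
    exact TreeProofAux.converse_part hn r h1 h2 h4 h5 hmax
end

section
/- Let s > σ_1 + σ_2 > 0 and define for functions a on ℤ^d × ℝ^d the weighted norm ‖a‖_s = ∫ |â(w)| e^{s|w|} κ(dw). If the Moyal commutator [a,b]_ħ has Fourier transform given by the twisted convolution with kernel σ_ħ^1 satisfying |σ_ħ^1(w', w - w')| ≤ 2|w'||w-w'|, then ‖[a,b]_ħ‖_{s-σ_1-σ_2} ≤ (2/(e² σ_1(σ_1+σ_2))) ‖a‖_s ‖b‖_{s-σ_2}. -/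
open MeasureTheory

/-- The frequency space `𝒵^{2d} = ℤ^d × ℝ^d`. -/
abbrev FreqSpace (d : ℕ) := (Fin d → ℤ) × (Fin d → ℝ)

/-- The measure `κ` on `ℤ^d × ℝ^d`: counting measure times Lebesgue measure. -/
noncomputable def freqMeasure (d : ℕ) : Measure (FreqSpace d) :=
  (Measure.count : Measure (Fin d → ℤ)).prod (volume : Measure (Fin d → ℝ))

/-- Euclidean norm of `w = (k,η) ∈ ℤ^d × ℝ^d` viewed in `ℝ^{2d}`. -/
noncomputable def freqNorm {d : ℕ} (w : FreqSpace d) : ℝ :=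
  Real.sqrt ((∑ i, ((w.1 i : ℝ)) ^ 2) + ∑ i, (w.2 i) ^ 2)

/-- The weighted norm `‖a‖_s = ∫ |â(w)| e^{s|w|} κ(dw)` (on the Fourier side). -/
noncomputable def freqWeightedNorm {d : ℕ} (s : ℝ) (f : FreqSpace d → ℂ) : ℝ :=
  ∫ w, ‖f w‖ * Real.exp (s * freqNorm w) ∂(freqMeasure d)

/- ### Auxiliary lemmas -/

lemma aux_rexp {σ r : ℝ} (hσ : 0 < σ) (_hr : 0 ≤ r) :
    r * Real.exp (-(σ * r)) ≤ 1 / (Real.exp 1 * σ) := by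
  have h1 : σ * r ≤ Real.exp (σ * r - 1) := by
    have := Real.add_one_le_exp (σ * r - 1); linarith
  have hE := Real.exp_pos (-(σ * r))
  have key : σ * r * Real.exp (-(σ * r)) ≤ 1 / Real.exp 1 := by
    calc σ * r * Real.exp (-(σ * r))
        ≤ Real.exp (σ * r - 1) * Real.exp (-(σ * r)) :=
          mul_le_mul_of_nonneg_right h1 hE.le
      _ = Real.exp (-1 : ℝ) := by rw [← Real.exp_add]; ring_nf
      _ = 1 / Real.exp 1 := by rw [Real.exp_neg, one_div]
  calc r * Real.exp (-(σ * r)) = σ * r * Real.exp (-(σ * r)) / σ := by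
        field_simp
    _ ≤ (1 / Real.exp 1) / σ := by
        exact div_le_div_of_nonneg_right key hσ.le |>.trans_eq rfl
    _ = 1 / (Real.exp 1 * σ) := by rw [div_div]

instance count_sigmaFinite {α : Type*} [MeasurableSpace α] [Countable α]
    [MeasurableSingletonClass α] : SigmaFinite (Measure.count : Measure α) := by
  apply Measure.sigmaFinite_of_countable (S := Set.range fun a : α => ({a} : Set α))
    (Set.countable_range _)
  · rintro s ⟨a, rfl⟩; simp [Measure.count_singleton]
  · ext x; simp

instance count_isAddRightInvariant {G : Type*} [AddGroup G] [MeasurableSpace G]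
    [MeasurableSingletonClass G] [MeasurableAdd G] :
    (Measure.count : Measure G).IsAddRightInvariant := by
  constructor
  intro g
  ext s hs
  rw [Measure.map_apply (measurable_add_const g) hs]
  have himg : (· + g) ⁻¹' s = (fun y => y + -g) '' s := by
    ext x
    constructor
    · intro hx; exact ⟨x + g, hx, by simp⟩
    · rintro ⟨y, hy, rfl⟩; simpa using hy
  rw [himg, Measure.count_injective_image (add_left_injective (-g))]

lemma freqNorm_nonneg {d : ℕ} (w : FreqSpace d) : 0 ≤ freqNorm w := Real.sqrt_nonneg _

lemma freqNorm_eq {d : ℕ} (w : FreqSpace d) :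
    freqNorm w = ‖(WithLp.equiv 2 ((Fin d ⊕ Fin d) → ℝ)).symm
      (Sum.elim (fun i => ((w.1 i : ℝ))) w.2)‖ := by
  rw [EuclideanSpace.norm_eq, freqNorm]
  congr 1
  rw [Fintype.sum_sum_type]
  simp [sq_abs]

lemma freqNorm_add_le {d : ℕ} (a b : FreqSpace d) :
    freqNorm (a + b) ≤ freqNorm a + freqNorm b := by
  rw [freqNorm_eq, freqNorm_eq, freqNorm_eq]
  have h : (WithLp.equiv 2 ((Fin d ⊕ Fin d) → ℝ)).symm
        (Sum.elim (fun i => (((a + b).1 i : ℝ))) (a + b).2) =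
      (WithLp.equiv 2 ((Fin d ⊕ Fin d) → ℝ)).symm (Sum.elim (fun i => ((a.1 i : ℝ))) a.2) +
      (WithLp.equiv 2 ((Fin d ⊕ Fin d) → ℝ)).symm (Sum.elim (fun i => ((b.1 i : ℝ))) b.2) := by
    apply (WithLp.equiv 2 ((Fin d ⊕ Fin d) → ℝ)).injective
    funext x
    cases x <;> simp [Prod.fst_add, Prod.snd_add]
  rw [h]
  exact norm_add_le _ _

lemma measurable_freqNorm {d : ℕ} : Measurable (freqNorm (d := d)) := by
  apply Real.continuous_sqrt.measurable.comp
  apply Measurable.add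
  · exact Finset.measurable_sum _ fun i _ =>
      (((measurable_from_top (f := (Int.cast : ℤ → ℝ))).comp ((measurable_pi_apply i).comp measurable_fst)).pow_const 2)
  · exact Finset.measurable_sum _ fun i _ =>
      (((measurable_pi_apply i).comp measurable_snd).pow_const 2)

open ENNReal in
/-- Loss-of-analyticity estimate for the Moyal commutator: if the Fourier transform
of `[a,b]_ħ` is the twisted convolution of `â` and `b̂` with a kernel `K` obeying
`|K(w', w-w')| ≤ 2|w'||w-w'|`, then
`‖[a,b]_ħ‖_{s-σ₁-σ₂} ≤ (2/(e²σ₁(σ₁+σ₂))) ‖a‖_s ‖b‖_{s-σ₂}`. -/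
theorem moyal_commutator_norm_bound {d : ℕ} (s σ₁ σ₂ : ℝ)
    (hσ₁ : 0 < σ₁) (hσ₂ : 0 < σ₂) (hs : σ₁ + σ₂ < s)
    (A B : FreqSpace d → ℂ) (hA : Measurable A) (hB : Measurable B)
    (K : FreqSpace d → FreqSpace d → ℝ)
    (hKmeas : Measurable (Function.uncurry K))
    (hK : ∀ w' u, |K w' u| ≤ 2 * freqNorm w' * freqNorm u)
    (hAint : Integrable (fun w => ‖A w‖ * Real.exp (s * freqNorm w))
      (freqMeasure d))
    (hBint : Integrable
      (fun w => ‖B w‖ * Real.exp ((s - σ₂) * freqNorm w))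
      (freqMeasure d))
    (C : FreqSpace d → ℂ)
    (hC : ∀ w, C w = ∫ w', A w' * B (w - w') * (K w' (w - w') : ℂ) ∂(freqMeasure d)) :
    freqWeightedNorm (s - σ₁ - σ₂) C ≤
      2 / (Real.exp 1 ^ 2 * σ₁ * (σ₁ + σ₂)) *
        freqWeightedNorm s A * freqWeightedNorm (s - σ₂) B := by

  classical
  set t : ℝ := s - σ₁ - σ₂ with ht
  have ht0 : 0 < t := by rw [ht]; linarith
  set c : ℝ := 2 / (Real.exp 1 ^ 2 * σ₁ * (σ₁ + σ₂)) with hc0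
  have hσ12 : 0 < σ₁ + σ₂ := by linarith
  have hcpos : 0 < c := by
    rw [hc0]; apply div_pos two_pos; positivity
  set F : FreqSpace d → ℝ := fun w => ‖A w‖ * Real.exp (s * freqNorm w) with hF
  set G : FreqSpace d → ℝ := fun w => ‖B w‖ * Real.exp ((s - σ₂) * freqNorm w)
    with hG
  have hFnn : ∀ w, 0 ≤ F w := fun w => mul_nonneg (norm_nonneg _) (Real.exp_pos _).le
  have hGnn : ∀ w, 0 ≤ G w := fun w => mul_nonneg (norm_nonneg _) (Real.exp_pos _).le
  -- key pointwise estimate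
  have key : ∀ w w' : FreqSpace d,
      ‖A w'‖ * ‖B (w - w')‖ * |K w' (w - w')|
          * Real.exp (t * freqNorm w)
        ≤ c * (F w' * G (w - w')) := by
    intro w w'
    set u := w - w' with hu
    have hwu : w = w' + u := by rw [hu]; abel
    have htri : freqNorm w ≤ freqNorm w' + freqNorm u := by
      calc freqNorm w = freqNorm (w' + u) := by rw [← hwu]
        _ ≤ _ := freqNorm_add_le _ _
    have hN1 := freqNorm_nonneg w'
    have hN2 := freqNorm_nonneg u
    have hexp : Real.exp (t * freqNorm w)
        ≤ Real.exp (t * freqNorm w') * Real.exp (t * freqNorm u) := by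
      rw [← Real.exp_add]
      apply Real.exp_le_exp.mpr
      nlinarith [ht0.le]
    have h1 : freqNorm w' * Real.exp (t * freqNorm w')
        ≤ (1 / (Real.exp 1 * (σ₁ + σ₂))) * Real.exp (s * freqNorm w') := by
      have haux := aux_rexp (σ := σ₁ + σ₂) hσ12 hN1
      have hsplit : Real.exp (t * freqNorm w')
          = Real.exp (-((σ₁ + σ₂) * freqNorm w')) * Real.exp (s * freqNorm w') := by
        rw [← Real.exp_add]; congr 1; rw [ht]; ring
      rw [hsplit]
      calc freqNorm w' * (Real.exp (-((σ₁ + σ₂) * freqNorm w')) * Real.exp (s * freqNorm w'))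
          = (freqNorm w' * Real.exp (-((σ₁ + σ₂) * freqNorm w'))) * Real.exp (s * freqNorm w') := by
            ring
        _ ≤ _ := mul_le_mul_of_nonneg_right haux (Real.exp_pos _).le
    have h2 : freqNorm u * Real.exp (t * freqNorm u)
        ≤ (1 / (Real.exp 1 * σ₁)) * Real.exp ((s - σ₂) * freqNorm u) := by
      have haux := aux_rexp (σ := σ₁) hσ₁ hN2
      have hsplit : Real.exp (t * freqNorm u)
          = Real.exp (-(σ₁ * freqNorm u)) * Real.exp ((s - σ₂) * freqNorm u) := by
        rw [← Real.exp_add]; congr 1; rw [ht]; ring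
      rw [hsplit]
      calc freqNorm u * (Real.exp (-(σ₁ * freqNorm u)) * Real.exp ((s - σ₂) * freqNorm u))
          = (freqNorm u * Real.exp (-(σ₁ * freqNorm u))) * Real.exp ((s - σ₂) * freqNorm u) := by
            ring
        _ ≤ _ := mul_le_mul_of_nonneg_right haux (Real.exp_pos _).le
    have hc_eq : c = 2 * ((1 / (Real.exp 1 * (σ₁ + σ₂))) * (1 / (Real.exp 1 * σ₁))) := by
      have he2 : Real.exp 1 ^ 2 = Real.exp 2 := by
        rw [sq, ← Real.exp_add]; norm_num
      have := Real.exp_pos 1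
      rw [hc0]
      field_simp
    calc ‖A w'‖ * ‖B u‖ * |K w' u| * Real.exp (t * freqNorm w)
        ≤ ‖A w'‖ * ‖B u‖ * (2 * freqNorm w' * freqNorm u)
            * (Real.exp (t * freqNorm w') * Real.exp (t * freqNorm u)) := by
          apply mul_le_mul
          · exact mul_le_mul_of_nonneg_left (hK w' u)
              (mul_nonneg (norm_nonneg _) (norm_nonneg _))
          · exact hexp
          · positivity
          · positivity
      _ = ‖A w'‖ * ‖B u‖ * 2
            * ((freqNorm w' * Real.exp (t * freqNorm w'))
              * (freqNorm u * Real.exp (t * freqNorm u))) := by ring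
      _ ≤ ‖A w'‖ * ‖B u‖ * 2
            * (((1 / (Real.exp 1 * (σ₁ + σ₂))) * Real.exp (s * freqNorm w'))
              * ((1 / (Real.exp 1 * σ₁)) * Real.exp ((s - σ₂) * freqNorm u))) := by
          apply mul_le_mul_of_nonneg_left _ (by positivity)
          exact mul_le_mul h1 h2 (by positivity) (by positivity)
      _ = c * (F w' * G u) := by rw [hc_eq, hF, hG]; ring
  -- instances for the measure
  haveI hSF : SigmaFinite (freqMeasure d) := by
    show SigmaFinite ((Measure.count : Measure (Fin d → ℤ)).prod volume)
    infer_instance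
  haveI hInv : (freqMeasure d).IsAddRightInvariant := by
    show Measure.IsAddRightInvariant ((Measure.count : Measure (Fin d → ℤ)).prod volume)
    infer_instance
  -- measurability
  have hsub : Measurable (fun p : FreqSpace d × FreqSpace d => p.1 - p.2) :=
    measurable_fst.sub measurable_snd
  set f : FreqSpace d × FreqSpace d → ℂ :=
    fun p => A p.2 * B (p.1 - p.2) * (K p.2 (p.1 - p.2) : ℂ) with hf
  have hfm : Measurable f := by
    apply Measurable.mul
    · exact (hA.comp measurable_snd).mul (hB.comp hsub)
    · exact Complex.measurable_ofReal.comp (hKmeas.comp (measurable_snd.prodMk hsub))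
  have hCm : Measurable C := by
    have h1 : StronglyMeasurable fun w => ∫ w', f (w, w') ∂(freqMeasure d) :=
      hfm.stronglyMeasurable.integral_prod_right'
    have hCeq : C = fun w => ∫ w', f (w, w') ∂(freqMeasure d) := funext hC
    rw [hCeq]; exact h1.measurable
  have hFm : Measurable F :=
    (continuous_norm.measurable.comp hA).mul
      (Real.continuous_exp.measurable.comp (measurable_const.mul measurable_freqNorm))
  have hGm : Measurable G :=
    (continuous_norm.measurable.comp hB).mul
      (Real.continuous_exp.measurable.comp (measurable_const.mul measurable_freqNorm))
  set g : FreqSpace d → ℝ := fun w => ‖C w‖ * Real.exp (t * freqNorm w) with hg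
  have hgnn : ∀ w, 0 ≤ g w := fun w => mul_nonneg (norm_nonneg _) (Real.exp_pos _).le
  have hgm : Measurable g :=
    (continuous_norm.measurable.comp hCm).mul
      (Real.continuous_exp.measurable.comp (measurable_const.mul measurable_freqNorm))
  -- pointwise bound after taking the integral inside the absolute value
  have hpt : ∀ w, ENNReal.ofReal (g w)
      ≤ ∫⁻ w', ENNReal.ofReal (c * (F w' * G (w - w'))) ∂(freqMeasure d) := by
    intro w
    have h1 : (‖C w‖₊ : ℝ≥0∞) ≤ ∫⁻ w', ‖f (w, w')‖₊ ∂(freqMeasure d) := by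
      rw [hC w]
      exact enorm_integral_le_lintegral_enorm _
    have h2 : ENNReal.ofReal (g w)
        = (‖C w‖₊ : ℝ≥0∞) * ENNReal.ofReal (Real.exp (t * freqNorm w)) := by
      rw [hg, ENNReal.ofReal_mul (norm_nonneg _)]
      congr 1
      exact ofReal_norm _
    rw [h2]
    calc (‖C w‖₊ : ℝ≥0∞) * ENNReal.ofReal (Real.exp (t * freqNorm w))
        ≤ (∫⁻ w', ‖f (w, w')‖₊ ∂(freqMeasure d))
            * ENNReal.ofReal (Real.exp (t * freqNorm w)) := mul_le_mul_left h1 _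
      _ = ∫⁻ w', (‖f (w, w')‖₊ : ℝ≥0∞)
            * ENNReal.ofReal (Real.exp (t * freqNorm w)) ∂(freqMeasure d) :=
          (lintegral_mul_const' _ _ ENNReal.ofReal_ne_top).symm
      _ ≤ ∫⁻ w', ENNReal.ofReal (c * (F w' * G (w - w'))) ∂(freqMeasure d) := by
          apply lintegral_mono
          intro w'
          dsimp only
          have h3 : (‖f (w, w')‖₊ : ℝ≥0∞) * ENNReal.ofReal (Real.exp (t * freqNorm w))
              = ENNReal.ofReal (‖A w'‖ * ‖B (w - w')‖
                  * |K w' (w - w')| * Real.exp (t * freqNorm w)) := by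
            rw [show (‖f (w, w')‖₊ : ℝ≥0∞) = ENNReal.ofReal ‖f (w, w')‖ from (ofReal_norm _).symm, ← ENNReal.ofReal_mul (norm_nonneg _)]
            congr 1
            rw [hf]
            simp only [norm_mul, Complex.norm_real, Real.norm_eq_abs]
          rw [h3]
          exact ENNReal.ofReal_le_ofReal (key w w')
  -- values of the lintegrals of F and G
  have hWA : 0 ≤ freqWeightedNorm s A := integral_nonneg hFnn
  have hWB : 0 ≤ freqWeightedNorm (s - σ₂) B := integral_nonneg hGnn
  have hAlin : ∫⁻ w, ENNReal.ofReal (F w) ∂(freqMeasure d)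
      = ENNReal.ofReal (freqWeightedNorm s A) := by
    rw [← ofReal_integral_eq_lintegral_ofReal hAint (Filter.Eventually.of_forall hFnn)]
    rfl
  have hBlin : ∫⁻ w, ENNReal.ofReal (G w) ∂(freqMeasure d)
      = ENNReal.ofReal (freqWeightedNorm (s - σ₂) B) := by
    rw [← ofReal_integral_eq_lintegral_ofReal hBint (Filter.Eventually.of_forall hGnn)]
    rfl
  -- Fubini and translation invariance
  have hswap : ∫⁻ w, ∫⁻ w', ENNReal.ofReal (c * (F w' * G (w - w')))
        ∂(freqMeasure d) ∂(freqMeasure d)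
      = ENNReal.ofReal c * (ENNReal.ofReal (freqWeightedNorm s A)
          * ENNReal.ofReal (freqWeightedNorm (s - σ₂) B)) := by
    rw [lintegral_lintegral_swap]
    · have hinner : ∀ w', ∫⁻ w, ENNReal.ofReal (c * (F w' * G (w - w'))) ∂(freqMeasure d)
          = (ENNReal.ofReal c * ENNReal.ofReal (F w'))
              * ENNReal.ofReal (freqWeightedNorm (s - σ₂) B) := by
        intro w'
        have hsplit : ∀ w, ENNReal.ofReal (c * (F w' * G (w - w')))
            = (ENNReal.ofReal c * ENNReal.ofReal (F w')) * ENNReal.ofReal (G (w - w')) := by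
          intro w
          rw [ENNReal.ofReal_mul hcpos.le, ENNReal.ofReal_mul (hFnn w'), mul_assoc]
        simp_rw [hsplit]
        rw [lintegral_const_mul' _ _ (ENNReal.mul_ne_top ENNReal.ofReal_ne_top
          ENNReal.ofReal_ne_top)]
        rw [lintegral_sub_right_eq_self (fun u => ENNReal.ofReal (G u)) w', hBlin]
      simp_rw [hinner]
      rw [lintegral_mul_const' _ _ ENNReal.ofReal_ne_top,
        lintegral_const_mul' _ _ ENNReal.ofReal_ne_top, hAlin, mul_assoc]
    · apply Measurable.aemeasurable
      apply ENNReal.measurable_ofReal.comp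
      exact measurable_const.mul ((hFm.comp measurable_snd).mul (hGm.comp hsub))
  -- main lintegral bound
  have main : ∫⁻ w, ENNReal.ofReal (g w) ∂(freqMeasure d)
      ≤ ENNReal.ofReal (c * freqWeightedNorm s A * freqWeightedNorm (s - σ₂) B) := by
    calc ∫⁻ w, ENNReal.ofReal (g w) ∂(freqMeasure d)
        ≤ ∫⁻ w, ∫⁻ w', ENNReal.ofReal (c * (F w' * G (w - w')))
            ∂(freqMeasure d) ∂(freqMeasure d) := lintegral_mono hpt
      _ = ENNReal.ofReal c * (ENNReal.ofReal (freqWeightedNorm s A)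
            * ENNReal.ofReal (freqWeightedNorm (s - σ₂) B)) := hswap
      _ = ENNReal.ofReal (c * freqWeightedNorm s A * freqWeightedNorm (s - σ₂) B) := by
          rw [← ENNReal.ofReal_mul hWA, ← ENNReal.ofReal_mul hcpos.le, mul_assoc]
  -- conclude
  have hfinal : freqWeightedNorm t C
      ≤ c * freqWeightedNorm s A * freqWeightedNorm (s - σ₂) B := by
    rw [freqWeightedNorm, integral_eq_lintegral_of_nonneg_ae
      (Filter.Eventually.of_forall hgnn) hgm.aestronglyMeasurable]
    exact ENNReal.toReal_le_of_le_ofReal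
      (mul_nonneg (mul_nonneg hcpos.le hWA) hWB) main
  calc freqWeightedNorm (s - σ₁ - σ₂) C = freqWeightedNorm t C := by rw [ht]
    _ ≤ c * freqWeightedNorm s A * freqWeightedNorm (s - σ₂) B := hfinal
    _ = 2 / (Real.exp 1 ^ 2 * σ₁ * (σ₁ + σ₂)) * freqWeightedNorm s A
          * freqWeightedNorm (s - σ₂) B := by rw [hc0]
end
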